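/- arXiv:1706.06825 — 8 statements merged into one kernel-verified Lean document; each statement's English description precedes it below -/
import Mathlib

section
/- Let (V,𝓑) be a t-(v,k,λ) covering and let X ⊆ V with |X| ≤ t. Then the number of blocks of 𝓑 containing X is at least C_λ(v−|X|, k−|X|, t−|X|). -/
/-- A t-(v,k,λ) covering: V has v points, every block is a k-subset of V,
and every t-subset of V is contained in at least λ blocks. -/
def IsCovering {α : Type*} [DecidableEq α] (v k t lam : ℕ)
    (V : Finset α) (B : Multiset (Finset α)) : Prop :=
  V.card = v ∧ (∀ b ∈ B, b ⊆ V ∧ b.card = k) ∧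
    ∀ T ⊆ V, T.card = t → lam ≤ Multiset.card (B.filter (fun b => T ⊆ b))

/-- The covering number C_λ(v,k,t): the minimum number of blocks of a t-(v,k,λ) covering. -/
noncomputable def coveringNumber (lam v k t : ℕ) : ℕ :=
  sInf {n | ∃ B : Multiset (Finset (Fin v)), Multiset.card B = n ∧
    IsCovering v k t lam Finset.univ B}

/-- If (V,𝓑) is a t-(v,k,λ) covering and X ⊆ V with |X| ≤ t, then the number of
blocks containing X is at least C_λ(v−|X|, k−|X|, t−|X|). -/
theorem stmt1 {α : Type*} [DecidableEq α] (v k t lam : ℕ)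
    (ht : 0 < t) (htk : t ≤ k) (hkv : k ≤ v) (hlam : 0 < lam)
    (V : Finset α) (B : Multiset (Finset α))
    (hcov : IsCovering v k t lam V B)
    (X : Finset α) (hXV : X ⊆ V) (hXt : X.card ≤ t) :
    coveringNumber lam (v - X.card) (k - X.card) (t - X.card)
      ≤ Multiset.card (B.filter (fun b => X ⊆ b)) := by
  obtain ⟨hV, hblocks, hc⟩ := hcov
  set m := v - X.card with hm
  set W : Finset α := V \ X with hW
  have hWcard : W.card = m := by
    rw [hW, Finset.card_sdiff_of_subset hXV, hV]
  have hXtv : X.card ≤ v := le_trans hXt (le_trans htk hkv)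
  by_cases hm0 : m = 0
  · -- degenerate case: X.card = v = t = k
    have hXv : X.card = v := le_antisymm hXtv (Nat.le_of_sub_eq_zero (hm ▸ hm0))
    have htv : t = v := le_antisymm (le_trans htk hkv) (hXv ▸ hXt)
    have hXcardt : X.card = t := hXv.trans htv.symm
    have hN : lam ≤ Multiset.card (B.filter (fun b => X ⊆ b)) :=
      hc X hXV hXcardt
    refine le_trans (Nat.sInf_le ?_) hN
    refine ⟨Multiset.replicate lam ∅, by simp, ?_⟩
    have hk0 : k - X.card = 0 := by omega
    have ht0 : t - X.card = 0 := by omega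
    rw [hm0] at *
    refine ⟨by simp, ?_, ?_⟩
    · intro b hb
      rw [Multiset.eq_of_mem_replicate hb]
      simp [hk0]
    · intro T _ hT
      rw [ht0, Finset.card_eq_zero] at hT
      subst hT
      rw [Multiset.filter_eq_self.mpr (fun _ _ => by simp)]
      simp
  · -- main case
    have hmpos : 0 < m := Nat.pos_of_ne_zero hm0
    have : Nonempty (Fin m) := ⟨⟨0, hmpos⟩⟩
    obtain ⟨e⟩ : Nonempty (W ≃ Fin m) := ⟨W.equivFinOfCardEq hWcard⟩
    classical
    set f : α → Fin m := fun a => if h : a ∈ W then e ⟨a, h⟩ else Classical.arbitrary (Fin m) with hf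
    have hf_inj : Set.InjOn f (W : Set α) := by
      intro a ha b hb hab
      simp only [hf, dif_pos (by exact_mod_cast ha), dif_pos (by exact_mod_cast hb)] at hab
      have := e.injective hab
      exact congrArg Subtype.val this
    set F : Finset α → Finset (Fin m) := fun b => (b \ X).image f with hF
    set P : Finset α → Prop := fun b => X ⊆ b with hP
    set B' : Multiset (Finset (Fin m)) := (B.filter P).map F with hB'
    refine Nat.sInf_le ⟨B', by simp [hB', hP], ?_, ?_, ?_⟩
    · simp
    · -- blocks have the right size
      intro b' hb'
      rw [hB', Multiset.mem_map] at hb'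
      obtain ⟨b, hb, rfl⟩ := hb'
      rw [Multiset.mem_filter] at hb
      obtain ⟨hbB, hXb⟩ := hb
      obtain ⟨hbV, hbk⟩ := hblocks b hbB
      refine ⟨Finset.subset_univ _, ?_⟩
      have hsub : b \ X ⊆ W := by
        rw [hW]; exact Finset.sdiff_subset_sdiff hbV le_rfl
      rw [hF]
      rw [Finset.card_image_of_injOn (hf_inj.mono (by exact_mod_cast hsub))]
      rw [Finset.card_sdiff_of_subset hXb, hbk]
    · -- covering condition
      intro T _ hTcard
      set g : Fin m → α := fun i => ((e.symm i : W) : α) with hg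
      have hg_inj : Function.Injective g := by
        intro i j hij
        exact e.symm.injective (Subtype.ext hij)
      have hgW : ∀ i, g i ∈ W := fun i => (e.symm i).2
      set S : Finset α := T.image g with hS
      have hScard : S.card = t - X.card := by
        rw [hS, Finset.card_image_of_injective _ hg_inj, hTcard]
      have hSW : S ⊆ W := by
        intro a ha
        rw [hS, Finset.mem_image] at ha
        obtain ⟨i, _, rfl⟩ := ha
        exact hgW i
      have hdisj : Disjoint S X := by
        refine Finset.disjoint_left.mpr fun a ha haX => ?_
        exact (Finset.mem_sdiff.mp (hSW ha)).2 haX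
      have hSXcard : (S ∪ X).card = t := by
        rw [Finset.card_union_of_disjoint hdisj, hScard]
        omega
      have hSXV : S ∪ X ⊆ V := Finset.union_subset
        (hSW.trans (Finset.sdiff_subset)) hXV
      have hlam' := hc (S ∪ X) hSXV hSXcard
      refine le_trans hlam' ?_
      -- map the blocks containing S ∪ X into B'.filter (T ⊆ ·)
      have key : (B.filter (fun b => S ∪ X ⊆ b)).map F ≤
          B'.filter (fun b' => T ⊆ b') := by
        rw [Multiset.le_filter]
        constructor
        · rw [hB']
          exact Multiset.map_le_map (Multiset.monotone_filter_right _
            (fun b hb => hP ▸ (Finset.union_subset_iff.mp hb).2))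
        · intro b' hb'
          rw [Multiset.mem_map] at hb'
          obtain ⟨b, hb, rfl⟩ := hb'
          rw [Multiset.mem_filter] at hb
          obtain ⟨hbB, hSXb⟩ := hb
          intro i hi
          rw [hF, Finset.mem_image]
          refine ⟨g i, ?_, ?_⟩
          · rw [Finset.mem_sdiff]
            refine ⟨hSXb (Finset.mem_union_left _ ?_), ?_⟩
            · rw [hS]; exact Finset.mem_image_of_mem g hi
            · exact (Finset.mem_sdiff.mp (hgW i)).2
          · show f (g i) = i
            rw [show f (g i) = e ⟨g i, hgW i⟩ from dif_pos (hgW i)]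
            have : (⟨g i, hgW i⟩ : W) = e.symm i := Subtype.ext rfl
            rw [this, Equiv.apply_symm_apply]
      calc Multiset.card (B.filter (fun b => S ∪ X ⊆ b))
          = Multiset.card ((B.filter (fun b => S ∪ X ⊆ b)).map F) := by simp
        _ ≤ _ := Multiset.card_le_card key
end

section
/- For positive integers t ≤ k ≤ v with k < v and λ ≥ 1, the covering number satisfies C_λ(v,k,t) ≥ ⌈(v/k) · C_λ(v−1,k−1,t−1)⌉. -/
/-- transfer lemma: any covering on any type bounds the covering number. -/
lemma coveringNumber_le {α : Type*} [DecidableEq α] {v k t lam : ℕ} (hv : 0 < v)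
    {V : Finset α} {B : Multiset (Finset α)} (hB : IsCovering v k t lam V B) :
    coveringNumber lam v k t ≤ Multiset.card B := by
  obtain ⟨hVc, hblocks, hcov⟩ := hB
  have e : V ≃ Fin v := V.equivFin.trans (finCongr hVc)
  set F : α → Fin v := fun a => if h : a ∈ V then e ⟨a, h⟩ else ⟨0, hv⟩ with hF
  have hFmem : ∀ a (h : a ∈ V), F a = e ⟨a, h⟩ := fun a h => dif_pos h
  have hFinj : Set.InjOn F V := by
    intro a ha b hb hab
    rw [hFmem a ha, hFmem b hb] at hab
    exact Subtype.ext_iff.mp (e.injective hab)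
  refine Nat.sInf_le ⟨B.map (Finset.image F), by simp, by simp, ?_, ?_⟩
  · intro b hb
    obtain ⟨c, hc, rfl⟩ := Multiset.mem_map.mp hb
    obtain ⟨hcV, hck⟩ := hblocks c hc
    exact ⟨Finset.subset_univ _, by rw [Finset.card_image_of_injOn (hFinj.mono hcV), hck]⟩
  · intro T _ hT
    set T' : Finset α := T.image (fun i => ((e.symm i : V) : α)) with hT'
    have hT'V : T' ⊆ V := by
      intro a ha
      obtain ⟨i, _, rfl⟩ := Finset.mem_image.mp ha
      exact (e.symm i).2
    have hT'c : T'.card = t := by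
      rw [hT', Finset.card_image_of_injective _
        (fun i j h => e.symm.injective (Subtype.ext h)), hT]
    have key := hcov T' hT'V hT'c
    refine le_trans key ?_
    rw [Multiset.filter_map]
    refine le_trans (Multiset.card_le_card (Multiset.monotone_filter_right B ?_))
      (le_of_eq (by rw [Multiset.card_map]))
    intro b hb
    simp only [Function.comp]
    intro i hi
    have hmem : ((e.symm i : V) : α) ∈ b := hb (Finset.mem_image_of_mem _ hi)
    have : F ((e.symm i : V) : α) = i := by
      rw [hFmem _ (e.symm i).2]
      simp
    exact this ▸ Finset.mem_image_of_mem F hmem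

lemma coveringNumber_exists (lam v k t : ℕ) (htk : t ≤ k) (hkv : k ≤ v) (hlam : 0 < lam) :
    ∃ B : Multiset (Finset (Fin v)), Multiset.card B = coveringNumber lam v k t ∧
      IsCovering v k t lam Finset.univ B := by
  have hne : {n | ∃ B : Multiset (Finset (Fin v)), Multiset.card B = n ∧
      IsCovering v k t lam Finset.univ B}.Nonempty := by
    refine ⟨_, lam • (Finset.powersetCard k (Finset.univ : Finset (Fin v))).val, rfl,
      by simp, ?_, ?_⟩
    · intro b hb
      rw [Multiset.mem_nsmul] at hb
      replace hb := hb.2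
      have := Finset.mem_powersetCard.mp (Finset.mem_val.mp hb)
      exact ⟨this.1, this.2⟩
    · intro T _ hT
      rw [Multiset.filter_nsmul, Multiset.card_nsmul]
      have : ∃ u, T ⊆ u ∧ u ⊆ Finset.univ ∧ u.card = k :=
        Finset.exists_subsuperset_card_eq (Finset.subset_univ T) (by omega)
          (by simpa using hkv)
      obtain ⟨u, hu1, hu2, hu3⟩ := this
      have hmem : u ∈ Multiset.filter (fun b => T ⊆ b)
          (Finset.powersetCard k (Finset.univ : Finset (Fin v))).val := by
        rw [Multiset.mem_filter]
        exact ⟨Finset.mem_powersetCard.mpr ⟨hu2, hu3⟩, hu1⟩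
      calc lam = lam * 1 := (mul_one lam).symm
        _ ≤ _ := Nat.mul_le_mul_left lam (Multiset.card_pos_iff_exists_mem.mpr ⟨u, hmem⟩)
  exact (Nat.sInf_mem hne :)

/-- sum of point-degrees equals sum of block sizes -/
lemma sum_degrees {α : Type*} [DecidableEq α] [Fintype α] (B : Multiset (Finset α)) :
    ∑ x : α, Multiset.card (B.filter (fun b => x ∈ b)) = (B.map Finset.card).sum := by
  induction B using Multiset.induction with
  | empty => simp
  | cons b B ih =>
    simp only [Multiset.map_cons, Multiset.sum_cons, ← ih, Multiset.filter_cons]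
    have : ∀ x : α, Multiset.card
        ((if x ∈ b then {b} else 0) + Multiset.filter (fun c => x ∈ c) B)
        = (if x ∈ b then 1 else 0) + Multiset.card (Multiset.filter (fun c => x ∈ c) B) := by
      intro x; split <;> simp [add_comm]
    simp only [this, Finset.sum_add_distrib]
    congr 1
    simp [Finset.sum_ite_mem]

/-- C_λ(v,k,t) ≥ ⌈(v/k) · C_λ(v−1,k−1,t−1)⌉. -/
theorem stmt2 (v k t lam : ℕ) (ht : 0 < t) (htk : t ≤ k) (hkv : k < v) (hlam : 0 < lam) :
    (⌈((v : ℚ) / k) * (coveringNumber lam (v - 1) (k - 1) (t - 1))⌉ : ℤ)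
      ≤ (coveringNumber lam v k t : ℤ) := by
  obtain ⟨B, hBcard, hBV, hblocks, hcov⟩ := coveringNumber_exists lam v k t htk hkv.le hlam
  set n := coveringNumber lam v k t with hn
  set m := coveringNumber lam (v - 1) (k - 1) (t - 1) with hm
  have hder : ∀ x : Fin v, m ≤ Multiset.card (B.filter (fun b => x ∈ b)) := by
    intro x
    have hIC : IsCovering (v - 1) (k - 1) (t - 1) lam (Finset.univ.erase x)
        ((B.filter (fun b => x ∈ b)).map (fun b => b.erase x)) := by
      refine ⟨by simp, ?_, ?_⟩
      · intro b hb
        obtain ⟨c, hc, rfl⟩ := Multiset.mem_map.mp hb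
        rw [Multiset.mem_filter] at hc
        obtain ⟨hcB, hxc⟩ := hc
        obtain ⟨hcV, hck⟩ := hblocks c hcB
        exact ⟨Finset.erase_subset_erase x hcV, by rw [Finset.card_erase_of_mem hxc, hck]⟩
      · intro T hTV hT
        have hxT : x ∉ T := fun h => (Finset.mem_erase.mp (hTV h)).1 rfl
        have h1 := hcov (insert x T) (Finset.subset_univ _)
          (by rw [Finset.card_insert_of_notMem hxT, hT]; omega)
        refine le_trans h1 ?_
        rw [Multiset.filter_map]
        rw [Multiset.card_map, Multiset.filter_filter]
        refine Multiset.card_le_card (Multiset.monotone_filter_right B ?_)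
        intro b hb
        refine ⟨?_, hb (Finset.mem_insert_self x T)⟩
        intro y hy
        exact Finset.mem_erase.mpr ⟨fun h => hxT (h ▸ hy),
          hb (Finset.mem_insert_of_mem hy)⟩
    have := coveringNumber_le (by omega) hIC
    rwa [Multiset.card_map] at this
  have hsum := sum_degrees B
  have hbk : (B.map Finset.card).sum = n * k := by
    have : B.map Finset.card = Multiset.replicate n k := by
      refine Multiset.eq_replicate.mpr ⟨by rw [Multiset.card_map, hBcard], ?_⟩
      intro c hc
      obtain ⟨b, hb, rfl⟩ := Multiset.mem_map.mp hc
      exact (hblocks b hb).2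
    rw [this, Multiset.sum_replicate, smul_eq_mul]
  have hvm : v * m ≤ n * k := by
    calc v * m = ∑ _x : Fin v, m := by simp [mul_comm]
      _ ≤ ∑ x : Fin v, Multiset.card (B.filter (fun b => x ∈ b)) :=
          Finset.sum_le_sum (fun x _ => hder x)
      _ = n * k := by rw [hsum, hbk]
  rw [Int.ceil_le]
  have hk0 : (0 : ℚ) < (k : ℚ) := by exact_mod_cast (by omega : 0 < k)
  push_cast
  rw [div_mul_eq_mul_div, div_le_iff₀ hk0]
  exact_mod_cast hvm
end

section
/- Let s ≤ k be positive integers and let b_s, b_{s+1}, …, b_{2s} be positive reals satisfying b_{i+1} ≤ ((k−i)/(v−i)) · b_i for i = s, s+1, …, 2s−1, where v ≥ k + 1 (so in particular b_{2s−i} ≤ (C(k−s,s−i)/C(v−s,s−i)) · b_s for i = 0,…,s−1). Then ∑_{i=0}^{s−1} C(s,i) · C(v−s, s−i) · b_{2s−i} ≤ b_s · (C(k,s) − 1). -/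
/-- If positive reals b_s,…,b_{2s} satisfy b_{i+1} ≤ ((k−i)/(v−i))·b_i for s ≤ i ≤ 2s−1
(with s ≤ k and v ≥ k+1), then ∑_{i=0}^{s−1} C(s,i)·C(v−s,s−i)·b_{2s−i} ≤ b_s·(C(k,s)−1). -/
theorem stmt5 (s k v : ℕ) (hs : 0 < s) (hsk : s ≤ k) (hkv : k + 1 ≤ v)
    (b : ℕ → ℝ) (hbpos : ∀ i, 0 < b i)
    (hdec : ∀ i, s ≤ i → i ≤ 2 * s - 1 →
      b (i + 1) ≤ ((k : ℝ) - i) / ((v : ℝ) - i) * b i) :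
    ∑ i ∈ Finset.range s,
        (s.choose i : ℝ) * ((v - s).choose (s - i) : ℝ) * b (2 * s - i)
      ≤ b s * ((k.choose s : ℝ) - 1) := by
  by_cases hk2 : 2 * s - 1 ≤ k
  case neg =>
    exfalso
    have hk' : s ≤ k ∧ k ≤ 2 * s - 1 := ⟨hsk, by omega⟩
    have hstep := hdec k hk'.1 hk'.2
    have : ((k : ℝ) - k) / ((v : ℝ) - k) * b k = 0 := by
      simp [sub_self]
    rw [this] at hstep
    linarith [hbpos (k + 1)]
  -- Main case: 2*s - 1 ≤ k
  have key : ∀ j, j ≤ s → ((v - s).descFactorial j : ℝ) * b (s + j)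
      ≤ ((k - s).descFactorial j : ℝ) * b s := by
    intro j
    induction j with
    | zero => intro _; simp
    | succ j ih =>
      intro hj
      have hjs : j ≤ s := by omega
      have IH := ih hjs
      have hstep := hdec (s + j) (by omega) (by omega)
      have hVpos : (0:ℝ) < (v : ℝ) - (s + j : ℕ) := by
        have : (s + j : ℕ) < v := by omega
        push_cast
        have := (Nat.cast_lt (α := ℝ)).mpr this
        push_cast at this
        linarith
      have hKnn : (0:ℝ) ≤ (k : ℝ) - (s + j : ℕ) := by
        have : (s + j : ℕ) ≤ k := by omega
        have := (Nat.cast_le (α := ℝ)).mpr this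
        push_cast at this ⊢
        linarith
      have hApos : (0:ℝ) < ((v - s).descFactorial j : ℝ) := by
        have : (v - s).descFactorial j ≠ 0 := by
          rw [Ne, Nat.descFactorial_eq_zero_iff_lt]
          omega
        exact_mod_cast Nat.pos_of_ne_zero this
      have hstep' : b (s + j + 1) * ((v : ℝ) - (s + j : ℕ))
          ≤ ((k : ℝ) - (s + j : ℕ)) * b (s + j) := by
        rw [div_mul_eq_mul_div] at hstep
        exact (le_div_iff₀ hVpos).mp hstep
      -- rewrite descFactorial successors
      have hdv : ((v - s).descFactorial (j + 1) : ℝ)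
          = ((v : ℝ) - (s + j : ℕ)) * ((v - s).descFactorial j : ℝ) := by
        rw [Nat.descFactorial_succ]
        have h1 : (v - s - j : ℕ) = v - (s + j) := by omega
        push_cast [h1, Nat.cast_sub (show s + j ≤ v by omega)]
        ring
      have hdk : ((k - s).descFactorial (j + 1) : ℝ)
          = ((k : ℝ) - (s + j : ℕ)) * ((k - s).descFactorial j : ℝ) := by
        rw [Nat.descFactorial_succ]
        have h1 : (k - s - j : ℕ) = k - (s + j) := by omega
        push_cast [h1, Nat.cast_sub (show s + j ≤ k by omega)]
        ring
      have hgoal : s + (j + 1) = s + j + 1 := by omega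
      rw [hdv, hdk, hgoal]
      have h1 := mul_le_mul_of_nonneg_left hstep' hApos.le
      have h2 := mul_le_mul_of_nonneg_left IH hKnn
      nlinarith [hbpos (s + j), hbpos (s + j + 1)]
  -- termwise bound with binomials
  have term : ∀ i, i < s → (s.choose i : ℝ) * ((v - s).choose (s - i) : ℝ) * b (2 * s - i)
      ≤ (s.choose i : ℝ) * ((k - s).choose (s - i) : ℝ) * b s := by
    intro i hi
    have hj : s - i ≤ s := Nat.sub_le _ _
    have hkey := key (s - i) hj
    have h2s : 2 * s - i = s + (s - i) := by omega
    rw [h2s]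
    have hfpos : (0:ℝ) < ((s - i).factorial : ℝ) := by
      exact_mod_cast Nat.factorial_pos _
    have hv' : ((v - s).descFactorial (s - i) : ℝ)
        = ((s - i).factorial : ℝ) * ((v - s).choose (s - i) : ℝ) := by
      exact_mod_cast congrArg (Nat.cast (R := ℝ))
        (Nat.descFactorial_eq_factorial_mul_choose (v - s) (s - i))
    have hk' : ((k - s).descFactorial (s - i) : ℝ)
        = ((s - i).factorial : ℝ) * ((k - s).choose (s - i) : ℝ) := by
      exact_mod_cast congrArg (Nat.cast (R := ℝ))
        (Nat.descFactorial_eq_factorial_mul_choose (k - s) (s - i))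
    rw [hv', hk'] at hkey
    have hchoose : ((v - s).choose (s - i) : ℝ) * b (s + (s - i))
        ≤ ((k - s).choose (s - i) : ℝ) * b s := by
      have := (mul_le_mul_iff_of_pos_left hfpos).mp (by linarith [hkey] :
        ((s - i).factorial : ℝ) * (((v - s).choose (s - i) : ℝ) * b (s + (s - i)))
          ≤ ((s - i).factorial : ℝ) * (((k - s).choose (s - i) : ℝ) * b s))
      exact this
    have hcnn : (0:ℝ) ≤ (s.choose i : ℝ) := by positivity
    calc (s.choose i : ℝ) * ((v - s).choose (s - i) : ℝ) * b (s + (s - i))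
        = (s.choose i : ℝ) * (((v - s).choose (s - i) : ℝ) * b (s + (s - i))) := by ring
      _ ≤ (s.choose i : ℝ) * (((k - s).choose (s - i) : ℝ) * b s) :=
          mul_le_mul_of_nonneg_left hchoose hcnn
      _ = (s.choose i : ℝ) * ((k - s).choose (s - i) : ℝ) * b s := by ring
  -- Vandermonde
  have hvand : ∑ i ∈ Finset.range (s + 1), s.choose i * (k - s).choose (s - i) = k.choose s := by
    have h := Nat.add_choose_eq s (k - s) s
    rw [Finset.Nat.sum_antidiagonal_eq_sum_range_succ_mk] at h
    have hks : s + (k - s) = k := by omega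
    rw [hks] at h
    exact h.symm
  have hsum : (∑ i ∈ Finset.range s, (s.choose i : ℝ) * ((k - s).choose (s - i) : ℝ))
      = (k.choose s : ℝ) - 1 := by
    have h1 : ∑ i ∈ Finset.range s, s.choose i * (k - s).choose (s - i) + 1 = k.choose s := by
      have := hvand
      rw [Finset.sum_range_succ] at this
      simpa using this
    have : ((∑ i ∈ Finset.range s, s.choose i * (k - s).choose (s - i) : ℕ) : ℝ) + 1
        = (k.choose s : ℝ) := by exact_mod_cast congrArg (Nat.cast (R := ℝ)) h1
    push_cast at this
    linarith
  calc ∑ i ∈ Finset.range s, (s.choose i : ℝ) * ((v - s).choose (s - i) : ℝ) * b (2 * s - i)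
      ≤ ∑ i ∈ Finset.range s, (s.choose i : ℝ) * ((k - s).choose (s - i) : ℝ) * b s := by
        apply Finset.sum_le_sum
        intro i hi
        exact term i (Finset.mem_range.mp hi)
    _ = (∑ i ∈ Finset.range s, (s.choose i : ℝ) * ((k - s).choose (s - i) : ℝ)) * b s := by
        rw [Finset.sum_mul]
    _ = b s * ((k.choose s : ℝ) - 1) := by rw [hsum]; ring
end

section
/- Let s, b_s be positive integers and α, β nonnegative reals with α ≥ 2β. Let (V,𝓑) be an incidence structure with |V| = v and all blocks of size k ≥ s, such that b(X) ≥ b_s for every s-subset X, and |𝓑| ≥ α·|𝓥₀| + β·|𝓥₁| where 𝓥ᵢ = {X ∈ C(V,s) : b(X) = b_s + i} for i ∈ {0,1}. Then |𝓑| ≥ (b_s(α−β)C(v,s) + α C(v,s)) / ((α−β)C(k,s) + 1). -/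
private lemma sum_count_aux {γ : Type*} [DecidableEq γ] (V : Finset γ) (k s : ℕ)
    (B : Multiset (Finset γ)) (hB : ∀ b ∈ B, b ⊆ V ∧ b.card = k) :
    ∑ X ∈ V.powersetCard s, Multiset.card (B.filter fun b => X ⊆ b)
      = Multiset.card B * k.choose s := by
  induction B using Multiset.induction_on with
  | empty => simp
  | cons a B ih =>
      have ha := hB a (Multiset.mem_cons_self a B)
      have hB' : ∀ b ∈ B, b ⊆ V ∧ b.card = k := fun b hb =>
        hB b (Multiset.mem_cons_of_mem hb)
      have key : ∀ X : Finset γ,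
          Multiset.card ((a ::ₘ B).filter fun b => X ⊆ b)
            = (if X ⊆ a then 1 else 0) + Multiset.card (B.filter fun b => X ⊆ b) := by
        intro X
        rw [Multiset.filter_cons, Multiset.card_add, apply_ite Multiset.card]
        simp
      simp only [key]
      rw [Finset.sum_add_distrib, ih hB']
      have h1 : ∑ X ∈ V.powersetCard s, (if X ⊆ a then 1 else 0)
          = ((V.powersetCard s).filter (fun X => X ⊆ a)).card := by
        rw [Finset.card_filter]
      have h2 : (V.powersetCard s).filter (fun X => X ⊆ a) = a.powersetCard s := by
        ext X
        simp only [Finset.mem_filter, Finset.mem_powersetCard]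
        constructor
        · rintro ⟨⟨_, hXs⟩, hXa⟩; exact ⟨hXa, hXs⟩
        · rintro ⟨hXa, hXs⟩; exact ⟨⟨hXa.trans ha.1, hXs⟩, hXa⟩
      rw [h1, h2, Finset.card_powersetCard, ha.2, Multiset.card_cons]
      ring

/-- Lemma 6.2: if b(X) ≥ b_s for every s-subset X and |𝓑| ≥ α|𝓥₀| + β|𝓥₁| with
α ≥ 2β ≥ 0, where 𝓥ᵢ = {X : b(X) = b_s + i}, then
|𝓑| ≥ (b_s(α−β)C(v,s) + αC(v,s)) / ((α−β)C(k,s) + 1). -/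
theorem stmt13 {γ : Type*} [DecidableEq γ] (V : Finset γ) (B : Multiset (Finset γ))
    (v k s bs : ℕ) (α β : ℝ)
    (hv : V.card = v) (hs : 0 < s) (hbs : 0 < bs) (hsk : s ≤ k)
    (hα : 0 ≤ α) (hβ : 0 ≤ β) (hαβ : 2 * β ≤ α)
    (hB : ∀ b ∈ B, b ⊆ V ∧ b.card = k)
    (hlow : ∀ X ∈ Finset.powersetCard s V,
      bs ≤ Multiset.card (B.filter (fun b => X ⊆ b)))
    (hcard : α * (((Finset.powersetCard s V).filter
          (fun X => Multiset.card (B.filter (fun b => X ⊆ b)) = bs)).card : ℝ)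
        + β * (((Finset.powersetCard s V).filter
          (fun X => Multiset.card (B.filter (fun b => X ⊆ b)) = bs + 1)).card : ℝ)
      ≤ (Multiset.card B : ℝ)) :
    ((bs : ℝ) * (α - β) * (v.choose s : ℝ) + α * (v.choose s : ℝ))
        / ((α - β) * (k.choose s : ℝ) + 1)
      ≤ (Multiset.card B : ℝ) := by
  classical
  set P := V.powersetCard s with hP
  set f : Finset γ → ℕ := fun X => Multiset.card (B.filter fun b => X ⊆ b) with hf
  set c0 := (P.filter (fun X => f X = bs)).card with hc0
  set c1 := (P.filter (fun X => f X = bs + 1)).card with hc1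
  have hN : P.card = v.choose s := by rw [hP, Finset.card_powersetCard, hv]
  -- sum identity
  have hsum : ∑ X ∈ P, f X = Multiset.card B * k.choose s :=
    sum_count_aux V k s B hB
  -- pointwise lower bound with padding
  have hpad : ∀ X ∈ P, bs + 2 ≤ f X +
      (2 * (if f X = bs then 1 else 0) + (if f X = bs + 1 then 1 else 0)) := by
    intro X hX
    have h : bs ≤ f X := hlow X hX
    split_ifs <;> omega
  -- sum lower bound
  have hsum2 : (bs + 2) * P.card ≤ Multiset.card B * k.choose s + (2 * c0 + c1) := by
    have h1 : P.card • (bs + 2) ≤ ∑ X ∈ P, (f X +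
        (2 * (if f X = bs then 1 else 0) + (if f X = bs + 1 then 1 else 0))) :=
      Finset.card_nsmul_le_sum P _ _ hpad
    rw [smul_eq_mul, mul_comm] at h1
    have h2 : ∑ X ∈ P, (f X +
        (2 * (if f X = bs then 1 else 0) + (if f X = bs + 1 then 1 else 0)))
        = (∑ X ∈ P, f X) + (2 * c0 + c1) := by
      rw [Finset.sum_add_distrib, Finset.sum_add_distrib, ← Finset.mul_sum,
        ← Finset.card_filter, ← Finset.card_filter]
    rw [h2] at h1
    omega
  -- disjointness bound
  have hdisj : c0 + c1 ≤ P.card := by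
    have hd : Disjoint (P.filter (fun X => f X = bs)) (P.filter (fun X => f X = bs + 1)) := by
      rw [Finset.disjoint_filter]
      intro x _ h1 h2
      omega
    calc c0 + c1 = ((P.filter (fun X => f X = bs)) ∪ (P.filter (fun X => f X = bs + 1))).card := by
          rw [Finset.card_union_of_disjoint hd]
      _ ≤ P.card := Finset.card_le_card
          (Finset.union_subset (Finset.filter_subset _ _) (Finset.filter_subset _ _))
  -- move to reals
  have hsum2R : ((bs : ℝ) + 2) * (v.choose s : ℝ)
      ≤ (Multiset.card B : ℝ) * (k.choose s : ℝ) + (2 * (c0 : ℝ) + (c1 : ℝ)) := by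
    rw [← hN] at *
    exact_mod_cast hsum2
  have hdisjR : (c0 : ℝ) + (c1 : ℝ) ≤ (v.choose s : ℝ) := by
    rw [← hN]; exact_mod_cast hdisj
  have hcardR : α * (c0 : ℝ) + β * (c1 : ℝ) ≤ (Multiset.card B : ℝ) := hcard
  have hMpos : (0 : ℝ) < (α - β) * (k.choose s : ℝ) + 1 := by
    have : (0 : ℝ) ≤ (k.choose s : ℝ) := Nat.cast_nonneg _
    nlinarith
  rw [div_le_iff₀ hMpos]
  nlinarith [mul_nonneg (by linarith : (0:ℝ) ≤ α - β)
      (by linarith : (0:ℝ) ≤ (Multiset.card B : ℝ) * (k.choose s : ℝ) + (2 * (c0 : ℝ) + (c1 : ℝ)) - ((bs : ℝ) + 2) * (v.choose s : ℝ)),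
    mul_nonneg (by linarith : (0:ℝ) ≤ α - 2 * β)
      (by linarith : (0:ℝ) ≤ (v.choose s : ℝ) - ((c0 : ℝ) + (c1 : ℝ)))]
end

section
/- Let n be a positive integer and G a finite multigraph. Then G contains an n-independent set of size at least ⌈∑_{u ∈ V(G)} f_n(deg_G(u))⌉, where f_n(x) = 1 − x/(2n) if x ≤ n and f_n(x) = (n+1)/(2(x+1)) if x ≥ n. -/
noncomputable def Fct (n d : ℕ) : ℝ :=
  if ((d : ℕ) : ℝ) ≤ n then 1 - ((d : ℕ) : ℝ) / (2 * n)
  else ((n : ℝ) + 1) / (2 * (((d : ℕ) : ℝ) + 1))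

lemma Fct_le_one (n d : ℕ) (hn : 0 < n) : Fct n d ≤ 1 := by
  have hn' : (0:ℝ) < n := by exact_mod_cast hn
  unfold Fct
  split
  · have : (0:ℝ) ≤ (d:ℝ) / (2 * n) := by positivity
    linarith
  · rename_i h
    push_neg at h
    rw [div_le_one (by positivity)]
    linarith

lemma Fct_eq_of_ge (n d : ℕ) (hn : 0 < n) (h : n ≤ d) :
    Fct n d = ((n : ℝ) + 1) / (2 * ((d : ℝ) + 1)) := by
  have hn' : (0:ℝ) < n := by exact_mod_cast hn
  unfold Fct
  split
  · rename_i hle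
    have hd : d = n := le_antisymm (by exact_mod_cast hle) h
    subst hd
    field_simp
    ring
  · rfl

lemma Fct_step (n : ℕ) (hn : 0 < n) {j Δ : ℕ} (hj1 : 1 ≤ j) (hjΔ : j ≤ Δ)
    (hnΔ : n ≤ Δ) :
    ((n : ℝ) + 1) / (2 * Δ * (Δ + 1)) ≤ Fct n (j - 1) - Fct n j := by
  have hn' : (0:ℝ) < n := by exact_mod_cast hn
  have hΔ' : (0:ℝ) < Δ := by exact_mod_cast lt_of_lt_of_le hn hnΔ
  have hjΔ' : (j:ℝ) ≤ Δ := by exact_mod_cast hjΔ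
  have hnΔ' : (n:ℝ) ≤ Δ := by exact_mod_cast hnΔ
  have hcast : ((j - 1 : ℕ) : ℝ) = (j : ℝ) - 1 := by
    rw [Nat.cast_sub hj1]; norm_num
  rcases le_or_gt j n with hcase | hcase
  · -- j ≤ n : both values given by the linear branch; drop is 1/(2n)
    have hj' : (j:ℝ) ≤ n := by exact_mod_cast hcase
    have h1 : Fct n (j - 1) = 1 - ((j:ℝ) - 1) / (2 * n) := by
      unfold Fct
      rw [if_pos (by rw [hcast]; linarith), hcast]
    have h2 : Fct n j = 1 - (j:ℝ) / (2 * n) := by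
      unfold Fct
      rw [if_pos hj']
    rw [h1, h2]
    have hdiff : (1 - ((j:ℝ) - 1) / (2 * n)) - (1 - (j:ℝ) / (2 * n)) = 1 / (2 * n) := by
      field_simp
      ring
    rw [hdiff, div_le_div_iff₀ (by positivity) (by positivity)]
    nlinarith
  · -- n < j : both values given by the hyperbolic branch
    have hj' : (1:ℝ) ≤ j := by exact_mod_cast hj1
    have hnj : n ≤ j - 1 := by omega
    have h1 : Fct n (j - 1) = ((n:ℝ) + 1) / (2 * ((j:ℝ) - 1 + 1)) := by
      rw [Fct_eq_of_ge n (j-1) hn hnj, hcast]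
    have h2 : Fct n j = ((n:ℝ) + 1) / (2 * ((j:ℝ) + 1)) := by
      rw [Fct_eq_of_ge n j hn (le_of_lt hcase)]
    rw [h1, h2]
    have hjpos : (0:ℝ) < j := by linarith
    have hdiff : ((n:ℝ) + 1) / (2 * ((j:ℝ) - 1 + 1)) - ((n:ℝ) + 1) / (2 * ((j:ℝ) + 1))
        = ((n:ℝ) + 1) / (2 * (j:ℝ) * ((j:ℝ) + 1)) := by
      rw [sub_add_cancel]
      field_simp
      ring
    rw [hdiff]
    apply div_le_div_of_nonneg_left (by positivity) (by positivity)
    nlinarith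

lemma Fct_drop (n : ℕ) (hn : 0 < n) {Δ : ℕ} (hnΔ : n ≤ Δ) :
    ∀ m d : ℕ, m ≤ d → d ≤ Δ →
      (m : ℝ) * (((n : ℝ) + 1) / (2 * Δ * (Δ + 1))) ≤ Fct n (d - m) - Fct n d := by
  intro m
  induction m with
  | zero => intro d _ _; simp
  | succ m ih =>
    intro d hm hd
    have h1 := ih d (by omega) hd
    have h2 := Fct_step n hn (j := d - m) (by omega) (by omega) hnΔ
    have heq : d - (m + 1) = (d - m) - 1 := by omega
    rw [heq]
    push_cast
    linarith

lemma caro_tuza_aux {Vt : Type*} [DecidableEq Vt] (n : ℕ) (hn : 0 < n)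
    (μ : Vt → Vt → ℕ) (hsym : ∀ u w, μ u w = μ w u) (hloop : ∀ u, μ u u = 0)
    (A : Finset Vt) :
    ∃ S : Finset Vt,
      (∀ u ∈ S, ∑ w ∈ S.erase u, μ u w < n) ∧
      ∑ u ∈ A, Fct n (∑ w ∈ A, μ u w) ≤ (S.card : ℝ) := by
  induction A using Finset.strongInduction with
  | _ A ih =>
  by_cases hall : ∀ u ∈ A, ∑ w ∈ A, μ u w < n
  · refine ⟨A, ?_, ?_⟩
    · intro u hu
      rw [Finset.sum_erase _ (hloop u)]
      exact hall u hu
    · calc ∑ u ∈ A, Fct n (∑ w ∈ A, μ u w) ≤ ∑ _u ∈ A, (1:ℝ) :=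
        Finset.sum_le_sum fun u _ => Fct_le_one n _ hn
      _ = A.card := by simp
  · push_neg at hall
    obtain ⟨u₀, hu₀A, hu₀n⟩ := hall
    obtain ⟨v, hvA, hvmax⟩ := A.exists_max_image (fun u => ∑ w ∈ A, μ u w) ⟨u₀, hu₀A⟩
    set Δ := ∑ w ∈ A, μ v w with hΔdef
    have hnΔ : n ≤ Δ := le_trans hu₀n (hvmax u₀ hu₀A)
    have hΔpos : 0 < Δ := lt_of_lt_of_le hn hnΔ
    have hΔ' : (0:ℝ) < Δ := by exact_mod_cast hΔpos
    have hn' : (0:ℝ) < n := by exact_mod_cast hn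
    obtain ⟨S, hS1, hS2⟩ := ih (A.erase v) (Finset.erase_ssubset hvA)
    refine ⟨S, hS1, le_trans ?_ hS2⟩
    set c : ℝ := ((n : ℝ) + 1) / (2 * Δ * (Δ + 1)) with hc
    -- split off v from the sum over A
    have hsplit : ∑ u ∈ A, Fct n (∑ w ∈ A, μ u w)
        = (∑ u ∈ A.erase v, Fct n (∑ w ∈ A, μ u w)) + Fct n Δ := by
      rw [Finset.sum_erase_add A _ hvA]
    -- pointwise drop inequality
    have hpw : ∀ u ∈ A.erase v,
        Fct n (∑ w ∈ A, μ u w) + (μ u v : ℝ) * c ≤ Fct n (∑ w ∈ A.erase v, μ u w) := by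
      intro u hu
      have huA : u ∈ A := Finset.mem_of_mem_erase hu
      have hdeg : ∑ w ∈ A.erase v, μ u w = (∑ w ∈ A, μ u w) - μ u v := by
        have := Finset.sum_erase_add A (μ u) hvA
        omega
      have hmle : μ u v ≤ ∑ w ∈ A, μ u w := Finset.single_le_sum (by simp) hvA
      have hdle : ∑ w ∈ A, μ u w ≤ Δ := hvmax u huA
      have := Fct_drop n hn hnΔ (μ u v) (∑ w ∈ A, μ u w) hmle hdle
      rw [← hdeg] at this
      linarith
    have hsum : (∑ u ∈ A.erase v, (Fct n (∑ w ∈ A, μ u w) + (μ u v : ℝ) * c))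
        ≤ ∑ u ∈ A.erase v, Fct n (∑ w ∈ A.erase v, μ u w) :=
      Finset.sum_le_sum hpw
    rw [Finset.sum_add_distrib] at hsum
    -- total multiplicity towards v equals Δ
    have hmultv : ∑ u ∈ A.erase v, (μ u v : ℝ) = (Δ : ℝ) := by
      have h1 : ∑ u ∈ A.erase v, μ u v = ∑ u ∈ A.erase v, μ v u := by
        apply Finset.sum_congr rfl; intro u _; rw [hsym]
      have h2 : ∑ u ∈ A.erase v, μ v u = Δ := by
        rw [hΔdef]; exact Finset.sum_erase _ (hloop v)
      rw [← Nat.cast_sum, h1, h2]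
    have hmc : ∑ u ∈ A.erase v, (μ u v : ℝ) * c = (Δ : ℝ) * c := by
      rw [← Finset.sum_mul, hmultv]
    -- Fct n Δ = Δ * c
    have hFΔ : Fct n Δ = (Δ : ℝ) * c := by
      rw [Fct_eq_of_ge n Δ hn hnΔ, hc]
      field_simp
    rw [hsplit, hFΔ]
    rw [hmc] at hsum
    linarith

/-- Caro–Tuza: a finite multigraph (given by a symmetric loopless edge-multiplicity
function μ) has an n-independent set S (i.e. every vertex of S has degree < n in the
sub-multigraph induced by S) of size at least ⌈∑_u f_n(deg u)⌉, where
f_n(x) = 1 − x/(2n) for x ≤ n and f_n(x) = (n+1)/(2(x+1)) for x ≥ n. -/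
theorem stmt14 {Vt : Type*} [Fintype Vt] [DecidableEq Vt] (n : ℕ) (hn : 0 < n)
    (μ : Vt → Vt → ℕ) (hsym : ∀ u w, μ u w = μ w u) (hloop : ∀ u, μ u u = 0) :
    ∃ S : Finset Vt,
      (∀ u ∈ S, ∑ w ∈ S.erase u, μ u w < n) ∧
      (⌈∑ u : Vt,
          (if ((∑ w : Vt, μ u w : ℕ) : ℝ) ≤ n then
            1 - ((∑ w : Vt, μ u w : ℕ) : ℝ) / (2 * n)
          else ((n : ℝ) + 1) / (2 * (((∑ w : Vt, μ u w : ℕ) : ℝ) + 1)))⌉ : ℤ)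
        ≤ (S.card : ℤ) := by
  obtain ⟨S, h1, h2⟩ := caro_tuza_aux n hn μ hsym hloop Finset.univ
  refine ⟨S, h1, ?_⟩
  rw [Int.ceil_le]
  push_cast
  simpa [Fct] using h2
end

section
/- Let m, t, q be positive integers with q a prime power, and suppose there exists a t-(q^t, q^{t−1}, 1) covering with q·(q^t−1)/(q−1) blocks (e.g., the (t−1)-flats of AG(t,q)). Then C(v, m·q^{t−1}, t) ≤ q·(q^t−1)/(q−1) for every v with t ≤ v ≤ m·q^t. -/
/-- Blow-up bound: if q is a prime power and there is a t-(q^t, q^{t−1}, 1) covering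
with N = q(q^t−1)/(q−1) blocks, then C(v, m q^{t−1}, t) ≤ N for all t ≤ v ≤ m q^t. -/
theorem stmt15 (m t q N : ℕ) (hm : 0 < m) (ht : 0 < t) (hq : IsPrimePow q)
    (hN : N * (q - 1) = q * (q ^ t - 1))
    (hexists : ∃ B : Multiset (Finset (Fin (q ^ t))), Multiset.card B = N ∧
      IsCovering (q ^ t) (q ^ (t - 1)) t 1 Finset.univ B) :
    ∀ v, t ≤ v → v ≤ m * q ^ t →
      coveringNumber 1 v (m * q ^ (t - 1)) t ≤ N := by
  classical
  intro v hv hv2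
  set k := m * q ^ (t - 1) with hk
  obtain ⟨B, hBcard, hVcard, hBblocks, hBcov⟩ := hexists
  have hq2 : 2 ≤ q := hq.two_le
  have htq : t ≤ q ^ t := le_trans (Nat.lt_two_pow_self (n := t)).le (Nat.pow_le_pow_left hq2 t)
  rcases lt_or_ge v k with hvk | hvk
  · -- no covering exists: the set is empty, so sInf = 0
    have hempty : {n | ∃ B : Multiset (Finset (Fin v)), Multiset.card B = n ∧
        IsCovering v k t 1 Finset.univ B} = ∅ := by
      ext n
      simp only [Set.mem_setOf_eq, Set.mem_empty_iff_false, iff_false]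
      rintro ⟨C, hCcard, hVc, hCblocks, hCcov⟩
      obtain ⟨T, hTsub, hTcard⟩ := Finset.exists_subset_card_eq
        (show t ≤ (Finset.univ : Finset (Fin v)).card by simpa using hv)
      have h1 := hCcov T hTsub hTcard
      have : ∃ b ∈ C.filter (fun b => T ⊆ b), True := by
        have := Multiset.card_pos.mp (lt_of_lt_of_le one_pos h1)
        obtain ⟨b, hb⟩ := Multiset.exists_mem_of_ne_zero this
        exact ⟨b, hb, trivial⟩
      obtain ⟨b, hb, -⟩ := this
      have hbC : b ∈ C := Multiset.mem_of_mem_filter hb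
      have hbk : b.card = k := (hCblocks b hbC).2
      have : b.card ≤ v := by
        calc b.card ≤ (Finset.univ : Finset (Fin v)).card := Finset.card_le_card (hCblocks b hbC).1
        _ = v := by simp
      omega
    unfold coveringNumber
    rw [hempty]
    simp [Nat.sInf_empty]
  · -- construct the blow-up covering
    have hqt : 0 < q ^ t := by positivity
    have hfv : ∀ i : Fin v, (i : ℕ) / m < q ^ t := by
      intro i
      rw [Nat.div_lt_iff_lt_mul hm]
      calc (i : ℕ) < v := i.isLt
      _ ≤ m * q ^ t := hv2
      _ = q ^ t * m := mul_comm _ _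
    set f : Fin v → Fin (q ^ t) := fun i => ⟨(i : ℕ) / m, hfv i⟩ with hf
    -- preimage of a block has card ≤ k
    have hpre : ∀ b : Finset (Fin (q ^ t)),
        (Finset.univ.filter (fun i => f i ∈ b)).card ≤ m * b.card := by
      intro b
      have hinj : ∀ x ∈ Finset.univ.filter (fun i => f i ∈ b),
          ∀ y ∈ Finset.univ.filter (fun i => f i ∈ b),
          (f x, (x : ℕ) % m) = (f y, (y : ℕ) % m) → x = y := by
        intro x hx y hy hxy
        have h1 : f x = f y := (Prod.mk.injEq _ _ _ _).mp hxy |>.1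
        have h2 : (x : ℕ) % m = (y : ℕ) % m := (Prod.mk.injEq _ _ _ _).mp hxy |>.2
        have h3 : (x : ℕ) / m = (y : ℕ) / m := by simpa [hf] using congrArg Fin.val h1
        have : (x : ℕ) = (y : ℕ) := by
          rw [← Nat.div_add_mod (x : ℕ) m, ← Nat.div_add_mod (y : ℕ) m, h2, h3]
        exact Fin.ext this
      have hmaps : ∀ x ∈ Finset.univ.filter (fun i => f i ∈ b),
          (f x, (x : ℕ) % m) ∈ b ×ˢ Finset.range m := by
        intro x hx
        simp only [Finset.mem_filter] at hx
        exact Finset.mem_product.mpr ⟨hx.2, Finset.mem_range.mpr (Nat.mod_lt _ hm)⟩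
      have := Finset.card_le_card_of_injOn _ hmaps hinj
      calc (Finset.univ.filter (fun i => f i ∈ b)).card
          ≤ (b ×ˢ Finset.range m).card := this
        _ = b.card * m := by rw [Finset.card_product, Finset.card_range]
        _ = m * b.card := mul_comm _ _
    have key : ∀ b : Finset (Fin (q ^ t)), b.card = q ^ (t - 1) →
        ∃ c : Finset (Fin v), (Finset.univ.filter (fun i => f i ∈ b)) ⊆ c ∧ c.card = k := by
      intro b hb
      have h1 : (Finset.univ.filter (fun i => f i ∈ b)).card ≤ k := by
        have := hpre b; rw [hb] at this; exact this
      have h2 : k ≤ (Finset.univ : Finset (Fin v)).card := by simpa using hvk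
      obtain ⟨c, hc1, hc2, hc3⟩ := Finset.exists_subsuperset_card_eq
        (Finset.subset_univ _) h1 h2
      exact ⟨c, hc1, hc3⟩
    set g : Finset (Fin (q ^ t)) → Finset (Fin v) := fun b =>
      if h : b.card = q ^ (t - 1) then (key b h).choose else ∅ with hg
    have hNmem : N ∈ {n | ∃ B : Multiset (Finset (Fin v)), Multiset.card B = n ∧
        IsCovering v k t 1 Finset.univ B} := by
      refine ⟨B.map g, by rw [Multiset.card_map, hBcard], by simp, ?_, ?_⟩
      · intro c hc
        obtain ⟨b, hb, rfl⟩ := Multiset.mem_map.mp hc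
        have hbcard := (hBblocks b hb).2
        refine ⟨Finset.subset_univ _, ?_⟩
        rw [hg]
        simp only [dif_pos hbcard]
        exact (key b hbcard).choose_spec.2
      · intro T hT hTcard
        -- extend image of T to a t-set
        have himg : (T.image f).card ≤ t := le_trans (Finset.card_image_le) hTcard.le
        obtain ⟨S, hS1, hS2, hS3⟩ := Finset.exists_subsuperset_card_eq
          (Finset.subset_univ (T.image f)) himg (by simpa using htq)
        have hcov := hBcov S hS2 hS3
        obtain ⟨b, hb⟩ := Multiset.exists_mem_of_ne_zero
          (Multiset.card_pos.mp (lt_of_lt_of_le one_pos hcov))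
        rw [Multiset.mem_filter] at hb
        obtain ⟨hbB, hSb⟩ := hb
        have hbcard := (hBblocks b hbB).2
        have hTgb : T ⊆ g b := by
          have hpre_sub : T ⊆ Finset.univ.filter (fun i => f i ∈ b) := by
            intro x hx
            simp only [Finset.mem_filter, Finset.mem_univ, true_and]
            exact hSb (hS1 (Finset.mem_image_of_mem f hx))
          rw [hg]
          simp only [dif_pos hbcard]
          exact hpre_sub.trans (key b hbcard).choose_spec.1
        have : g b ∈ (B.map g).filter (fun c => T ⊆ c) :=
          Multiset.mem_filter.mpr ⟨Multiset.mem_map_of_mem g hbB, hTgb⟩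
        exact Multiset.card_pos_iff_exists_mem.mpr ⟨g b, this⟩
    exact Nat.sInf_le hNmem
end

section
/- Let v, m, q, t be positive integers with q ≥ 2, m ≥ 2q+2, 2 ≤ t < m·q^{t−1}, and m·q^t − 2q + 3 ≤ v ≤ m·q^t. Define ℓ_t = 1 and ℓ_i = ⌈((v−i)/(m q^{t−1} − i)) · ℓ_{i+1}⌉ for i = t−1, t−2, …, 2. Then ℓ_i = (q^{t−i+1} − 1)/(q − 1) for i = t−1, t−2, …, 2. -/
/-- Lemma 7.3(i): with ℓ_t = 1 and ℓ_i = ⌈((v−i)/(m q^{t−1} − i))·ℓ_{i+1}⌉ for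
2 ≤ i < t, one has ℓ_i = (q^{t−i+1} − 1)/(q − 1) for i = t−1, …, 2. -/
theorem stmt16 (v m q t : ℕ) (hq : 2 ≤ q) (hm : 2 * q + 2 ≤ m)
    (ht : 2 ≤ t) (htk : t < m * q ^ (t - 1))
    (hv1 : m * q ^ t - 2 * q + 3 ≤ v) (hv2 : v ≤ m * q ^ t)
    (L : ℕ → ℕ) (hLt : L t = 1)
    (hL : ∀ i, 2 ≤ i → i < t →
      (L i : ℤ) = ⌈(((v : ℚ) - i) / ((m : ℚ) * q ^ (t - 1) - i)) * (L (i + 1) : ℚ)⌉) :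
    ∀ i, 2 ≤ i → i ≤ t - 1 → L i * (q - 1) = q ^ (t - i + 1) - 1 := by
  have hq0 : 0 < q := by omega
  have hqt : m * q ^ t = q * (m * q ^ (t - 1)) := by
    conv_lhs => rw [show t = (t-1)+1 by omega, pow_succ]
    ring
  rw [hqt] at hv1 hv2
  have h2k : 2 * q ≤ q * (m * q ^ (t-1)) := by
    calc 2 * q = q * 2 := by ring
    _ ≤ q * (m * q ^ (t-1)) := Nat.mul_le_mul_left q (by omega)
  -- rational facts independent of i
  have hv2Q : (v:ℚ) ≤ q * (m * q ^ (t-1)) := by exact_mod_cast hv2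
  have hv1Q : (q:ℚ) * (m * q ^ (t-1)) - 2*q + 3 ≤ v := by
    zify [h2k] at hv1
    exact_mod_cast hv1
  have hqQ : (2:ℚ) ≤ q := by exact_mod_cast hq
  -- key step
  have key : ∀ i, 2 ≤ i → i < t → L (i+1) * (q-1) = q^(t-i) - 1 →
      (L i : ℤ) = q * L (i+1) + 1 := by
    intro i h2 hit hih
    have hq2 : 2 ≤ q ^ (t - i) := le_trans hq (Nat.le_self_pow (by omega) q)
    have hl1 : 1 ≤ L (i+1) := by
      rcases Nat.eq_zero_or_pos (L (i+1)) with h | h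
      · rw [h] at hih; simp at hih; omega
      · exact h
    have hik : i < m * q ^ (t-1) := by omega
    have hD : (0:ℚ) < (m:ℚ) * q ^ (t-1) - i := by
      have h1 : (i:ℚ) < ((m * q ^ (t-1) : ℕ) : ℚ) := by exact_mod_cast hik
      push_cast at h1
      linarith
    have hℓQ : (L (i+1) : ℚ) * (q - 1) = q^(t-i) - 1 := by
      zify [show 1 ≤ q from by omega, show 1 ≤ q^(t-i) from by omega] at hih
      exact_mod_cast hih
    have hiqN : i * q^(t-i) ≤ q^(t-1) := by
      have h1 : i ≤ 2^(i-1) := by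
        have := Nat.lt_two_pow_self (n := i-1); omega
      have h2' : (2:ℕ)^(i-1) ≤ q^(i-1) := Nat.pow_le_pow_left hq _
      calc i * q^(t-i) ≤ q^(i-1) * q^(t-i) := Nat.mul_le_mul_right _ (le_trans h1 h2')
      _ = q^(t-1) := by rw [← pow_add]; congr 1; omega
    have hiqQ : (i:ℚ) * q^(t-i) ≤ q^(t-1) := by exact_mod_cast hiqN
    have hk1Q : (q:ℚ)^(t-1) ≤ m * q^(t-1) := by
      have : (1:ℚ) ≤ m := by exact_mod_cast (by omega : 1 ≤ m)
      nlinarith [pow_pos (by linarith : (0:ℚ) < q) (t-1)]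
    have hl1Q : (1:ℚ) ≤ L (i+1) := by exact_mod_cast hl1
    have hiQ : (2:ℚ) ≤ i := by exact_mod_cast h2
    rw [hL i h2 hit, Int.ceil_eq_iff]
    rw [div_mul_eq_mul_div]
    constructor
    · rw [lt_div_iff₀ hD]
      push_cast
      have hN : (1:ℚ) ≤ v + (q-1)*i - q*(m*q^(t-1)) := by
        nlinarith [mul_le_mul_of_nonneg_left hiQ (by linarith : (0:ℚ) ≤ q-1)]
      have hNl : (1:ℚ) ≤ (v + (q-1)*i - q*(m*q^(t-1))) * L (i+1) := by
        have := mul_le_mul hN hl1Q (by norm_num) (by linarith)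
        linarith
      linarith [hNl]
    · rw [div_le_iff₀ hD]
      push_cast
      have p1 : ((v:ℚ)-i) * L (i+1) ≤ (q*(m*q^(t-1)) - i) * L (i+1) :=
        mul_le_mul_of_nonneg_right (by linarith) (by linarith)
      have p2 : (i:ℚ)*((L (i+1):ℚ)*(q-1)) = i*(q^(t-i)-1) := by rw [hℓQ]
      linarith [p1, p2, hiqQ, hk1Q]
  -- downward induction
  have main : ∀ d, ∀ i, 2 ≤ i → i + d = t → L i * (q - 1) = q ^ (d + 1) - 1 := by
    intro d
    induction d with
    | zero =>
      intro i h2 hit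
      have : i = t := by omega
      subst this
      rw [hLt]; simp
    | succ d ih =>
      intro i h2 hit
      have hih := ih (i+1) (by omega) (by omega)
      have hdi : t - i = d + 1 := by omega
      have hkey := key i h2 (by omega) (by rw [hdi]; exact hih)
      have h1 : 1 ≤ q^(d+1) := Nat.one_le_pow _ _ hq0
      have h2' : 1 ≤ q^(d+1+1) := Nat.one_le_pow _ _ hq0
      have hihZ : (L (i+1) : ℤ) * (q-1) = q^(d+1) - 1 := by
        zify [show 1 ≤ q from by omega, h1] at hih
        exact_mod_cast hih
      zify [show 1 ≤ q from by omega, h2']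
      rw [hkey]
      push_cast
      linear_combination (q:ℤ) * hihZ
  intro i h2 hle
  exact main (t - i) i h2 (by omega)
end

section
/- Let s be a positive integer, v ≥ s·k where k ≥ 2s+1, and let b_{s}, …, b_{2s} be positive integers satisfying b_i ≥ ⌈((v−i)/(k−i)) · b_{i+1}⌉ for i = s, …, 2s−1. Define a_j = ∑_{i=0}^{j} (−1)^{i+j} C(j,i) b_{2s−i} for 0 ≤ j ≤ s. Then a_j ≥ 0 for all j ∈ {0, …, s}. -/
/-- Remark 2.4 (case v ≥ sk): if positive integers b_s,…,b_{2s} satisfy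
b_i ≥ ⌈((v−i)/(k−i))·b_{i+1}⌉ for s ≤ i ≤ 2s−1, where v ≥ s·k and k ≥ 2s+1, then
a_j = ∑_{i=0}^{j} (−1)^{i+j} C(j,i) b_{2s−i} ≥ 0 for all 0 ≤ j ≤ s. -/
theorem stmt18 (s k v : ℕ) (hs : 0 < s) (hk : 2 * s + 1 ≤ k) (hv : s * k ≤ v)
    (b : ℕ → ℕ) (hbpos : ∀ i, s ≤ i → i ≤ 2 * s → 0 < b i)
    (hrec : ∀ i, s ≤ i → i ≤ 2 * s - 1 →
      (⌈(((v : ℚ) - i) / ((k : ℚ) - i)) * (b (i + 1) : ℚ)⌉ : ℤ) ≤ (b i : ℤ)) :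
    ∀ j ≤ s,
      (0 : ℤ) ≤ ∑ i ∈ Finset.range (j + 1),
        (-1 : ℤ) ^ (i + j) * (j.choose i : ℤ) * (b (2 * s - i) : ℤ) := by
  -- key growth estimate: b (2s-(m+1)) ≥ s * b (2s-m) for m+1 ≤ s
  have key : ∀ m : ℕ, m + 1 ≤ s →
      (s : ℤ) * (b (2 * s - m) : ℤ) ≤ (b (2 * s - (m + 1)) : ℤ) := by
    intro m hm
    set i := 2 * s - (m + 1) with hi
    have hi1 : i + 1 = 2 * s - m := by omega
    have hsi : s ≤ i := by omega
    have hi2 : i ≤ 2 * s - 1 := by omega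
    have hik : i < k := by omega
    have h1 := hrec i hsi hi2
    have hkq : (0 : ℚ) < (k : ℚ) - i := by
      have : (i : ℚ) < (k : ℚ) := by exact_mod_cast hik
      linarith
    have hs1 : (1 : ℚ) ≤ (s : ℚ) := by exact_mod_cast hs
    have hvq : (s : ℚ) * k ≤ (v : ℚ) := by exact_mod_cast hv
    have hiq : (i : ℚ) ≤ (s : ℚ) * i :=
      le_mul_of_one_le_left (by positivity) hs1
    have hratio : (s : ℚ) ≤ ((v : ℚ) - i) / ((k : ℚ) - i) := by
      rw [le_div_iff₀ hkq]
      nlinarith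
    have hb0 : (0 : ℚ) ≤ (b (i + 1) : ℚ) := by positivity
    have h2 : ((s : ℚ)) * (b (i + 1) : ℚ) ≤
        (((v : ℚ) - i) / ((k : ℚ) - i)) * (b (i + 1) : ℚ) :=
      mul_le_mul_of_nonneg_right hratio hb0
    have h3 : ((s * b (i + 1) : ℤ) : ℚ) ≤
        (((v : ℚ) - i) / ((k : ℚ) - i)) * (b (i + 1) : ℚ) := by
      push_cast; exact h2
    have h4 : (s * b (i + 1) : ℤ) ≤ (b i : ℤ) := by
      refine le_trans ?_ h1
      have hc := Int.le_ceil ((((v : ℚ) - i) / ((k : ℚ) - i)) * (b (i + 1) : ℚ))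
      exact_mod_cast h3.trans hc
    rw [hi1] at h4
    exact h4
  intro j hj
  set f : ℕ → ℤ := fun i => (-1 : ℤ) ^ (i + j) * (j.choose i : ℤ) * (b (2 * s - i) : ℤ)
    with hf
  -- pair inequality
  have pair : ∀ m : ℕ, m + 1 ≤ j → Odd (m + j) → 0 ≤ f m + f (m + 1) := by
    intro m hm hodd
    have hodd' : Even (m + 1 + j) := by
      rcases hodd with ⟨t, ht⟩; exact ⟨t + 1, by omega⟩
    have e1 : (-1 : ℤ) ^ (m + j) = -1 := hodd.neg_one_pow
    have e2 : (-1 : ℤ) ^ (m + 1 + j) = 1 := hodd'.neg_one_pow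
    have hgrow : (j : ℤ) * (b (2 * s - m) : ℤ) ≤ (b (2 * s - (m + 1)) : ℤ) := by
      have hjq : (j : ℤ) ≤ (s : ℤ) := by exact_mod_cast hj
      have := key m (by omega)
      have hb : (0 : ℤ) ≤ (b (2 * s - m) : ℤ) := by positivity
      nlinarith
    have hch : (j.choose m : ℤ) ≤ (j : ℤ) * (j.choose (m + 1) : ℤ) := by
      have h := Nat.choose_succ_right_eq j m
      -- h : j.choose (m+1) * (m+1) = j.choose m * (j - m)
      have h1 : 1 ≤ j - m := by omega
      have h2 : j.choose m ≤ j.choose m * (j - m) :=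
        Nat.le_mul_of_pos_right _ (by omega)
      have h3 : j.choose (m + 1) * (m + 1) ≤ j.choose (m + 1) * j :=
        Nat.mul_le_mul_left _ (by omega)
      have : j.choose m ≤ j * j.choose (m + 1) := by
        calc j.choose m ≤ j.choose m * (j - m) := h2
          _ = j.choose (m + 1) * (m + 1) := h.symm
          _ ≤ j.choose (m + 1) * j := h3
          _ = j * j.choose (m + 1) := Nat.mul_comm _ _
      exact_mod_cast this
    have hb : (0 : ℤ) ≤ (b (2 * s - m) : ℤ) := by positivity
    have hc : (0 : ℤ) ≤ (j.choose (m + 1) : ℤ) := by positivity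
    simp only [hf, e1, e2]
    nlinarith [mul_le_mul hch hgrow (by positivity) (by positivity)]
  -- two-step induction on partial sums
  have main : ∀ t : ℕ, (j + 1) % 2 + 2 * t ≤ j + 1 →
      0 ≤ ∑ i ∈ Finset.range ((j + 1) % 2 + 2 * t), f i := by
    intro t
    induction t with
    | zero =>
      intro _
      rcases Nat.mod_two_eq_zero_or_one (j + 1) with h | h
      · simp [h]
      · have hje : Even j := by
          rcases Nat.even_or_odd j with he | ho
          · exact he
          · exfalso; rcases ho with ⟨t, ht⟩; omega
        have : Even (0 + j) := by simpa using hje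
        simp only [h, Nat.mul_zero, Nat.add_zero, Finset.sum_range_one, hf]
        simp only [this.neg_one_pow, Nat.choose_zero_right, Nat.cast_one, one_mul]
        positivity
    | succ t ih =>
      intro hle
      have hle' : (j + 1) % 2 + 2 * t ≤ j + 1 := by omega
      set m := (j + 1) % 2 + 2 * t with hmdef
      have hrange : (j + 1) % 2 + 2 * (t + 1) = m + 1 + 1 := by omega
      rw [hrange, Finset.sum_range_succ, Finset.sum_range_succ]
      have hodd : Odd (m + j) := by
        rcases Nat.mod_two_eq_zero_or_one (j + 1) with h | h
        · -- j odd
          have : j % 2 = 1 := by omega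
          refine Nat.odd_iff.mpr ?_
          omega
        · have : j % 2 = 0 := by omega
          refine Nat.odd_iff.mpr ?_
          omega
      have hp := pair m (by omega) hodd
      have := ih hle'
      linarith
  have hdecomp : (j + 1) % 2 + 2 * ((j + 1) / 2) = j + 1 := by omega
  have := main ((j + 1) / 2) (by omega)
  rw [hdecomp] at this
  exact this
end
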